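/- Let G be a group, k a positive natural number, and s : Fin k → G with symmetric image (for every i there is j with s j = (s i)⁻¹) and with Subgroup.closure (Set.range s) = ⊤. Let π : G →* H be a surjective group homomorphism. Then for every n the expected displacements satisfy E_H(n) ≤ E_G(n), and consequently limsup_{n → ∞} E_H(n)/n ≤ limsup_{n → ∞} E_G(n)/n: the speed of the simple random walk on a quotient marked group is at most the speed on the group (property (∗) of Proposition 6.4 for the speed). -/

import Mathlib

open Filter

/-- The word length of `g` in the marked group `(G, s)`: the least `m` such that `g` is a
product of `m` generators. -/
noncomputable def wordLength {G : Type*} [Group G] {k : ℕ} (s : Fin k → G) (g : G) : ℕ :=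
  sInf {m : ℕ | ∃ w : Fin m → Fin k, (List.ofFn (fun i => s (w i))).prod = g}

/-- The `n`-step distribution of the simple random walk on the marked group `(G, s)`. -/
noncomputable def rwDist {G : Type*} [Group G] {k : ℕ} (s : Fin k → G) (n : ℕ) (g : G) : ℝ :=
  (Nat.card {w : Fin n → Fin k | (List.ofFn (fun i => s (w i))).prod = g} : ℝ) / k ^ n

/-- The expected displacement at time `n` of the simple random walk on the marked
group `(G, s)`. -/
noncomputable def expectedDisplacement {G : Type*} [Group G] {k : ℕ} (s : Fin k → G)
    (n : ℕ) : ℝ :=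
  ∑' g : G, rwDist s n g * (wordLength s g : ℝ)

private noncomputable def wprod {G : Type*} [Group G] {k : ℕ} (s : Fin k → G) (n : ℕ)
    (w : Fin n → Fin k) : G :=
  (List.ofFn (fun i => s (w i))).prod

private lemma expectedDisplacement_eq {G : Type*} [Group G] {k : ℕ} (s : Fin k → G) (n : ℕ) :
    expectedDisplacement s n
      = ∑ w : Fin n → Fin k, (wordLength s (wprod s n w) : ℝ) / k ^ n := by
  classical
  have hset : ∀ g : G, {w : Fin n → Fin k | (List.ofFn (fun i => s (w i))).prod = g}
      = ↑(Finset.univ.filter fun w : Fin n → Fin k => wprod s n w = g) := by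
    intro g; ext w; rw [Set.mem_setOf_eq, Finset.mem_coe, Finset.mem_filter]; simp [wprod]
  have hcard : ∀ g : G,
      (Nat.card {w : Fin n → Fin k | (List.ofFn (fun i => s (w i))).prod = g})
        = (Finset.univ.filter fun w : Fin n → Fin k => wprod s n w = g).card := by
    intro g
    rw [hset g, Nat.card_coe_set_eq, Set.ncard_coe_finset]
  unfold expectedDisplacement rwDist
  rw [tsum_eq_sum (s := Finset.univ.image (wprod s n))
    (by
      intro g hg
      have : (Finset.univ.filter fun w : Fin n → Fin k => wprod s n w = g) = ∅ := by
        ext w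
        simp only [Finset.mem_filter, Finset.mem_univ, true_and, Finset.notMem_empty,
          iff_false]
        intro h
        exact hg (Finset.mem_image.mpr ⟨w, Finset.mem_univ w, h⟩)
      rw [hcard g, this]
      simp)]
  rw [← Finset.sum_fiberwise_of_maps_to
    (g := wprod s n) (t := Finset.univ.image (wprod s n))
    (fun w _ => Finset.mem_image.mpr ⟨w, Finset.mem_univ w, rfl⟩)
    (fun w => (wordLength s (wprod s n w) : ℝ) / k ^ n)]
  refine Finset.sum_congr rfl fun g _ => ?_
  rw [hcard g]
  rw [Finset.sum_congr rfl (fun w hw => by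
    rw [(Finset.mem_filter.mp hw).2])]
  rw [Finset.sum_const, nsmul_eq_mul]
  ring

private lemma wprod_comp {G H : Type*} [Group G] [Group H] {k : ℕ} (s : Fin k → G)
    (π : G →* H) (n : ℕ) (w : Fin n → Fin k) :
    wprod (⇑π ∘ s) n w = π (wprod s n w) := by
  unfold wprod
  have h : (List.ofFn fun i => (⇑π ∘ s) (w i)) = List.map π (List.ofFn fun i => s (w i)) := by
    rw [List.map_ofFn]; rfl
  rw [h, ← map_list_prod]

private lemma wordLength_comp_le {G H : Type*} [Group G] [Group H] {k : ℕ} (s : Fin k → G)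
    (π : G →* H) (n : ℕ) (w : Fin n → Fin k) :
    wordLength (⇑π ∘ s) (wprod (⇑π ∘ s) n w) ≤ wordLength s (wprod s n w) := by
  have hne : {m : ℕ | ∃ v : Fin m → Fin k,
      (List.ofFn (fun i => s (v i))).prod = wprod s n w}.Nonempty := ⟨n, w, rfl⟩
  obtain ⟨v, hv⟩ := Nat.sInf_mem hne
  apply Nat.sInf_le
  refine ⟨v, ?_⟩
  show wprod (⇑π ∘ s) _ v = wprod (⇑π ∘ s) n w
  rw [wprod_comp, wprod_comp]
  exact congrArg π hv

private lemma wordLength_wprod_le {G : Type*} [Group G] {k : ℕ} (s : Fin k → G) (n : ℕ)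
    (w : Fin n → Fin k) : wordLength s (wprod s n w) ≤ n :=
  Nat.sInf_le ⟨w, rfl⟩

theorem speed_quotient_le {G H : Type*} [Group G] [Group H] (k : ℕ) (hk : 0 < k)
    (s : Fin k → G) (hsym : ∀ i : Fin k, ∃ j : Fin k, s j = (s i)⁻¹)
    (hgen : Subgroup.closure (Set.range s) = ⊤)
    (π : G →* H) (hπ : Function.Surjective π) :
    (∀ n : ℕ, expectedDisplacement (⇑π ∘ s) n ≤ expectedDisplacement s n) ∧
    (Filter.atTop.limsup fun n : ℕ => expectedDisplacement (⇑π ∘ s) n / n) ≤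
      Filter.atTop.limsup fun n : ℕ => expectedDisplacement s n / n := by
  have hkpow : ∀ n : ℕ, (0:ℝ) < (k:ℝ) ^ n := fun n =>
    pow_pos (by exact_mod_cast hk) n
  have hle : ∀ n : ℕ, expectedDisplacement (⇑π ∘ s) n ≤ expectedDisplacement s n := by
    intro n
    rw [expectedDisplacement_eq, expectedDisplacement_eq]
    apply Finset.sum_le_sum
    intro w _
    exact div_le_div_of_nonneg_right (by exact_mod_cast wordLength_comp_le s π n w) (hkpow n).le
  refine ⟨hle, ?_⟩
  have hnonneg : ∀ n : ℕ, 0 ≤ expectedDisplacement (⇑π ∘ s) n := by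
    intro n
    rw [expectedDisplacement_eq]
    apply Finset.sum_nonneg
    intro w _
    positivity
  have hbd : ∀ n : ℕ, expectedDisplacement s n ≤ n := by
    intro n
    rw [expectedDisplacement_eq]
    calc ∑ w : Fin n → Fin k, (wordLength s (wprod s n w) : ℝ) / k ^ n
        ≤ ∑ _w : Fin n → Fin k, (n : ℝ) / k ^ n := by
          apply Finset.sum_le_sum
          intro w _
          exact div_le_div_of_nonneg_right (by exact_mod_cast wordLength_wprod_le s n w) (hkpow n).le
      _ = (n : ℝ) := by
          rw [Finset.sum_const, nsmul_eq_mul, Finset.card_univ, Fintype.card_fun]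
          field_simp
          simp only [Fintype.card_fin, Nat.cast_pow]
          ring
  apply Filter.limsup_le_limsup
  · filter_upwards with n
    rcases Nat.eq_zero_or_pos n with rfl | hn
    · simp
    · exact div_le_div_of_nonneg_right (hle n) (Nat.cast_nonneg n)
  · have hb : Filter.IsBoundedUnder (· ≥ ·) atTop
        (fun n : ℕ => expectedDisplacement (⇑π ∘ s) n / n) :=
      Filter.isBoundedUnder_of ⟨0, fun n => div_nonneg (hnonneg n) (Nat.cast_nonneg n)⟩
    exact hb.isCoboundedUnder_le
  · refine Filter.isBoundedUnder_of ⟨1, fun n => ?_⟩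
    rcases Nat.eq_zero_or_pos n with rfl | hn
    · simp
    · rw [div_le_one (by exact_mod_cast hn)]
      exact hbd n
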